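/- In the proof that history-deterministic safety/reachability timed automata are good for language inclusion: if S is a complete fair LTS with initial state q' whose language contains L(q) for a fair LTS initial state q, and q' has a resolver, then combining Player 1's letters with the resolver yields a winning strategy for Player 2 in the fair simulation game; i.e., history-determinism of q' together with L(q) ⊆ L(q') implies q ⊑_fair q'. -/

import Mathlib

/-- A fair labelled transition system: edges `E ⊆ V × A × V` together with an
acceptance condition `Acc` on infinite sequences of edges. -/
structure FairLTS (V A : Type) where
  E : Set (V × A × V)
  Acc : Set (ℕ → V × A × V)

namespace FairLTS

variable {V V' A : Type}

/-- `ρ` is a run on the word `w` from state `s₀`. -/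
def IsRun (S : FairLTS V A) (s₀ : V) (w : ℕ → A) (ρ : ℕ → V × A × V) : Prop :=
  (ρ 0).1 = s₀ ∧ ∀ n, ρ n ∈ S.E ∧ (ρ n).2.1 = w n ∧ (ρ (n + 1)).1 = (ρ n).2.2

/-- The language of infinite words admitting an accepting run from `s₀`. -/
def Lang (S : FairLTS V A) (s₀ : V) : Set (ℕ → A) :=
  {w | ∃ ρ, S.IsRun s₀ w ρ ∧ ρ ∈ S.Acc}

/-- Every state has at least one outgoing `a`-transition for every letter `a`. -/
def Complete (S : FairLTS V A) : Prop :=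
  ∀ s a, ∃ s', (s, a, s') ∈ S.E

/-- The finite run (as a list of edges) built by iterating a candidate resolver `r`
on the word `w`. -/
def histOf (r : List (V × A × V) → A → V × A × V) (w : ℕ → A) : ℕ → List (V × A × V)
  | 0 => []
  | n + 1 => histOf r w n ++ [r (histOf r w n) (w n)]

/-- The infinite run built by iterating `r` on the word `w`. -/
def runOf (r : List (V × A × V) → A → V × A × V) (w : ℕ → A) (n : ℕ) : V × A × V :=
  r (histOf r w n) (w n)

/-- `r` is a resolver from `s₀`: for every word of the language, the run it builds
is an accepting run on that word. -/
def IsResolver (S : FairLTS V A) (s₀ : V) (r : List (V × A × V) → A → V × A × V) : Prop :=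
  ∀ w ∈ S.Lang s₀, S.IsRun s₀ w (runOf r w) ∧ runOf r w ∈ S.Acc

/-- History-determinism: existence of a resolver. -/
def HistoryDeterministic (S : FairLTS V A) (s₀ : V) : Prop :=
  ∃ r, S.IsResolver s₀ r

end FairLTS

namespace FairLTS

variable {V V' A : Type}

/-- History of the fair simulation game: Player 1 plays the edges of `ρ₁` one by one,
and Player 2 answers with `σ` applied to the paired history and Player 1's new edge. -/
def simHist (σ : List ((V × A × V) × (V' × A × V')) → (V × A × V) → V' × A × V')
    (ρ₁ : ℕ → V × A × V) : ℕ → List ((V × A × V) × (V' × A × V'))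
  | 0 => []
  | n + 1 => simHist σ ρ₁ n ++ [(ρ₁ n, σ (simHist σ ρ₁ n) (ρ₁ n))]

/-- The run built by Player 2's strategy `σ` in response to Player 1's run `ρ₁`. -/
def simRun (σ : List ((V × A × V) × (V' × A × V')) → (V × A × V) → V' × A × V')
    (ρ₁ : ℕ → V × A × V) (n : ℕ) : V' × A × V' :=
  σ (simHist σ ρ₁ n) (ρ₁ n)

/-- Fair simulation: `s` is fairly simulated by `s'` iff Player 2 has a strategy in the
simulation game which answers every run of `S` from `s` by an equally-labelled run of `S'`
from `s'`, and which produces an accepting run whenever Player 1's run is accepting. -/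
def FairSim (S : FairLTS V A) (S' : FairLTS V' A) (s : V) (s' : V') : Prop :=
  ∃ σ, ∀ (w : ℕ → A) (ρ₁ : ℕ → V × A × V), S.IsRun s w ρ₁ →
    S'.IsRun s' w (simRun σ ρ₁) ∧ (ρ₁ ∈ S.Acc → simRun σ ρ₁ ∈ S'.Acc)

end FairLTS

namespace FairLTS

variable {V V' A : Type}

/-- The end state of a finite history (the target of the last edge, or `q'` if empty). -/
def hEnd (q' : V') (h : List (V' × A × V')) : V' :=
  h.getLast?.elim q' (·.2.2)

@[simp] lemma hEnd_nil (q' : V') : hEnd q' ([] : List (V' × A × V')) = q' := rfl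

@[simp] lemma hEnd_concat (q' : V') (h : List (V' × A × V')) (e : V' × A × V') :
    hEnd q' (h ++ [e]) = e.2.2 := by
  simp [hEnd, List.getLast?_concat]

open scoped Classical in
/-- Patch a candidate resolver so that it always produces a valid transition,
using completeness as a fallback. -/
noncomputable def patch (S' : FairLTS V' A) (q' : V') (hS' : S'.Complete)
    (r : List (V' × A × V') → A → V' × A × V') :
    List (V' × A × V') → A → V' × A × V' := fun h a =>
  if r h a ∈ S'.E ∧ (r h a).1 = hEnd q' h ∧ (r h a).2.1 = a then r h a
  else (hEnd q' h, a, (hS' (hEnd q' h) a).choose)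

lemma patch_src (S' : FairLTS V' A) (q' : V') (hS' : S'.Complete)
    (r : List (V' × A × V') → A → V' × A × V') (h : List (V' × A × V')) (a : A) :
    (patch S' q' hS' r h a).1 = hEnd q' h := by
  unfold patch; split
  · exact (by tauto)
  · rfl

lemma patch_mem (S' : FairLTS V' A) (q' : V') (hS' : S'.Complete)
    (r : List (V' × A × V') → A → V' × A × V') (h : List (V' × A × V')) (a : A) :
    patch S' q' hS' r h a ∈ S'.E := by
  unfold patch; split
  · exact (by tauto)
  · exact (hS' (hEnd q' h) a).choose_spec

lemma patch_lbl (S' : FairLTS V' A) (q' : V') (hS' : S'.Complete)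
    (r : List (V' × A × V') → A → V' × A × V') (h : List (V' × A × V')) (a : A) :
    (patch S' q' hS' r h a).2.1 = a := by
  unfold patch; split
  · exact (by tauto)
  · rfl

lemma hEnd_histOf_patch (S' : FairLTS V' A) (q' : V') (hS' : S'.Complete)
    (r : List (V' × A × V') → A → V' × A × V') (w : ℕ → A) (n : ℕ) :
    hEnd q' (histOf (patch S' q' hS' r) w (n + 1))
      = (runOf (patch S' q' hS' r) w n).2.2 := by
  show hEnd q' (_ ++ [_]) = _
  rw [hEnd_concat]; rfl

lemma patch_isRun (S' : FairLTS V' A) (q' : V') (hS' : S'.Complete)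
    (r : List (V' × A × V') → A → V' × A × V') (w : ℕ → A) :
    S'.IsRun q' w (runOf (patch S' q' hS' r) w) := by
  refine ⟨patch_src _ _ _ _ _ _, fun n => ⟨patch_mem _ _ _ _ _ _, patch_lbl _ _ _ _ _ _, ?_⟩⟩
  show (patch S' q' hS' r _ _).1 = _
  rw [patch_src, hEnd_histOf_patch]

/-- If `r` itself builds a run on `w`, the patched resolver agrees with `r` on `w`. -/
lemma patch_agree (S' : FairLTS V' A) (q' : V') (hS' : S'.Complete)
    (r : List (V' × A × V') → A → V' × A × V') (w : ℕ → A)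
    (hr : S'.IsRun q' w (runOf r w)) :
    ∀ n, histOf (patch S' q' hS' r) w n = histOf r w n := by
  have hend : ∀ n, (runOf r w n).1 = hEnd q' (histOf r w n) := by
    intro n
    induction n with
    | zero => exact hr.1
    | succ k ih =>
      have := (hr.2 k).2.2
      show (runOf r w (k + 1)).1 = hEnd q' (_ ++ [_])
      rw [hEnd_concat]
      exact this
  intro n
  induction n with
  | zero => rfl
  | succ k ih =>
    show histOf (patch S' q' hS' r) w k ++ [patch S' q' hS' r (histOf (patch S' q' hS' r) w k) (w k)]
        = histOf r w k ++ [r (histOf r w k) (w k)]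
    rw [ih]
    congr 1
    unfold patch
    rw [if_pos ⟨(hr.2 k).1, (hend k), (hr.2 k).2.1⟩]

lemma patch_runOf_eq (S' : FairLTS V' A) (q' : V') (hS' : S'.Complete)
    (r : List (V' × A × V') → A → V' × A × V') (w : ℕ → A)
    (hr : S'.IsRun q' w (runOf r w)) :
    runOf (patch S' q' hS' r) w = runOf r w := by
  funext n
  show patch S' q' hS' r (histOf (patch S' q' hS' r) w n) (w n) = _
  rw [patch_agree S' q' hS' r w hr n]
  unfold patch
  have hend : (runOf r w n).1 = hEnd q' (histOf r w n) := by
    induction n with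
    | zero => exact hr.1
    | succ k ih =>
      have := (hr.2 k).2.2
      show (runOf r w (k + 1)).1 = hEnd q' (_ ++ [_])
      rw [hEnd_concat]
      exact this
  rw [if_pos ⟨(hr.2 n).1, hend, (hr.2 n).2.1⟩]
  rfl

end FairLTS

/-- if `S'` is a complete fair LTS, history-deterministic from `q'`, and
`L(q) ⊆ L(q')` for a state `q` of a fair LTS `S`, then following the resolver yields a
winning strategy for Player 2 in the fair simulation game: `q ⊑_fair q'`. -/
theorem stmt18 {V V' A : Type} (S : FairLTS V A) (q : V)
    (S' : FairLTS V' A) (q' : V') (hS' : S'.Complete)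
    (hHD : S'.HistoryDeterministic q') (hsub : S.Lang q ⊆ S'.Lang q') :
    S.FairSim S' q q' := by
  classical
  obtain ⟨r, hr⟩ := hHD
  set p := FairLTS.patch S' q' hS' r with hp
  refine ⟨fun h e => p (h.map Prod.snd) e.2.1, ?_⟩
  intro w ρ₁ hρ₁
  set σ : List ((V × A × V) × (V' × A × V')) → (V × A × V) → V' × A × V' :=
    fun h e => p (h.map Prod.snd) e.2.1 with hσ
  have hlbl : ∀ n, (ρ₁ n).2.1 = w n := fun n => (hρ₁.2 n).2.1
  have hhist : ∀ n, (FairLTS.simHist σ ρ₁ n).map Prod.snd = FairLTS.histOf p w n := by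
    intro n
    induction n with
    | zero => rfl
    | succ k ih =>
      show ((FairLTS.simHist σ ρ₁ k) ++ [(ρ₁ k, σ (FairLTS.simHist σ ρ₁ k) (ρ₁ k))]).map Prod.snd
          = FairLTS.histOf p w k ++ [p (FairLTS.histOf p w k) (w k)]
      rw [List.map_append, ih]
      simp only [List.map_cons, List.map_nil, hσ, ih, hlbl k]
      exact congrArg (fun l => FairLTS.histOf p w k ++ [p l (w k)]) ih
  have hrun : FairLTS.simRun σ ρ₁ = FairLTS.runOf p w := by
    funext n
    show p ((FairLTS.simHist σ ρ₁ n).map Prod.snd) ((ρ₁ n).2.1) = _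
    rw [hhist n, hlbl n]
    rfl
  rw [hrun]
  refine ⟨FairLTS.patch_isRun S' q' hS' r w, fun hacc => ?_⟩
  have hwL : w ∈ S'.Lang q' := hsub ⟨ρ₁, hρ₁, hacc⟩
  obtain ⟨h1, h2⟩ := hr w hwL
  rw [hp, FairLTS.patch_runOf_eq S' q' hS' r w h1]
  exact h2
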